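/- arXiv:1804.01199 — 2 statements merged into one kernel-verified Lean document; each statement's English description precedes it below -/
import Mathlib

section
/- Let $Q \in M_n(\mathbb{C})$ be a positive invertible matrix, $1 < p < \infty$, and $X \in M_n(\mathbb{C})$ nonzero. Then $\frac{\log(\|XQ^{1/(2p)}\|_{S^{2p}}^{2p}) - \log(\|XQ^{1/2}\|_{HS}^2)}{1-p} \leq \log(\mathrm{tr}(Q)) - \log(\|XQ^{1/2}\|_{HS}^2)$. -/
open Matrix Filter
open scoped ComplexOrder

/-- `Q ^ r` for a Hermitian matrix `Q`, defined via the spectral decomposition. -/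
noncomputable def mpow {n : ℕ} (Q : Matrix (Fin n) (Fin n) ℂ) (hQ : Q.IsHermitian) (r : ℝ) :
    Matrix (Fin n) (Fin n) ℂ :=
  (hQ.eigenvectorUnitary : Matrix (Fin n) (Fin n) ℂ) *
    Matrix.diagonal (fun i => ((hQ.eigenvalues i ^ r : ℝ) : ℂ)) *
    (star hQ.eigenvectorUnitary : Matrix (Fin n) (Fin n) ℂ)

/-- The Schatten `p`-norm `tr(|A|^p)^(1/p)`, via the eigenvalues of `Aᴴ * A`. -/
noncomputable def schatten {n : ℕ} (p : ℝ) (A : Matrix (Fin n) (Fin n) ℂ) : ℝ :=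
  (∑ i, ((Matrix.posSemidef_conjTranspose_mul_self A).1.eigenvalues i) ^ (p / 2)) ^ (1 / p)

/-- The operator norm of a matrix, i.e. its largest singular value. -/
noncomputable def opN {n : ℕ} (A : Matrix (Fin n) (Fin n) ℂ) : ℝ :=
  ⨆ i, Real.sqrt ((Matrix.posSemidef_conjTranspose_mul_self A).1.eigenvalues i)

namespace LSAux

variable {n : ℕ}

lemma star_mul_self_eigU {Q : Matrix (Fin n) (Fin n) ℂ} (hQ : Q.IsHermitian) :
    (star hQ.eigenvectorUnitary : Matrix (Fin n) (Fin n) ℂ) *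
      (hQ.eigenvectorUnitary : Matrix (Fin n) (Fin n) ℂ) = 1 :=
  Matrix.UnitaryGroup.star_mul_self _

lemma mul_star_self_eigU {Q : Matrix (Fin n) (Fin n) ℂ} (hQ : Q.IsHermitian) :
    (hQ.eigenvectorUnitary : Matrix (Fin n) (Fin n) ℂ) *
      (star hQ.eigenvectorUnitary : Matrix (Fin n) (Fin n) ℂ) = 1 :=
  Matrix.mem_unitaryGroup_iff.mp hQ.eigenvectorUnitary.2

lemma mpow_mul_mpow {Q : Matrix (Fin n) (Fin n) ℂ} (hQ : Q.PosDef) (r s : ℝ) :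
    mpow Q hQ.1 r * mpow Q hQ.1 s = mpow Q hQ.1 (r + s) := by
  unfold mpow
  have hd : (Matrix.diagonal (fun i => ((hQ.1.eigenvalues i ^ r : ℝ) : ℂ))) *
      (Matrix.diagonal fun i => ((hQ.1.eigenvalues i ^ s : ℝ) : ℂ)) =
      Matrix.diagonal fun i => ((hQ.1.eigenvalues i ^ (r + s) : ℝ) : ℂ) := by
    rw [Matrix.diagonal_mul_diagonal]
    have : (fun i => ((hQ.1.eigenvalues i ^ r : ℝ) : ℂ) * ((hQ.1.eigenvalues i ^ s : ℝ) : ℂ))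
        = fun i => ((hQ.1.eigenvalues i ^ (r + s) : ℝ) : ℂ) := by
      funext i
      rw [← Complex.ofReal_mul, ← Real.rpow_add (hQ.eigenvalues_pos i)]
    rw [this]
  calc (hQ.1.eigenvectorUnitary : Matrix (Fin n) (Fin n) ℂ) *
        Matrix.diagonal (fun i => ((hQ.1.eigenvalues i ^ r : ℝ) : ℂ)) *
        (star hQ.1.eigenvectorUnitary : Matrix (Fin n) (Fin n) ℂ) *
        ((hQ.1.eigenvectorUnitary : Matrix (Fin n) (Fin n) ℂ) *
        Matrix.diagonal (fun i => ((hQ.1.eigenvalues i ^ s : ℝ) : ℂ)) *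
        (star hQ.1.eigenvectorUnitary : Matrix (Fin n) (Fin n) ℂ))
      = (hQ.1.eigenvectorUnitary : Matrix (Fin n) (Fin n) ℂ) *
        (Matrix.diagonal (fun i => ((hQ.1.eigenvalues i ^ r : ℝ) : ℂ)) *
        (((star hQ.1.eigenvectorUnitary : Matrix (Fin n) (Fin n) ℂ) *
          (hQ.1.eigenvectorUnitary : Matrix (Fin n) (Fin n) ℂ)) *
        (Matrix.diagonal (fun i => ((hQ.1.eigenvalues i ^ s : ℝ) : ℂ)) *
        (star hQ.1.eigenvectorUnitary : Matrix (Fin n) (Fin n) ℂ)))) := by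
        simp only [Matrix.mul_assoc]
    _ = _ := by
        rw [star_mul_self_eigU hQ.1, Matrix.one_mul, ← Matrix.mul_assoc
          (Matrix.diagonal _), hd, Matrix.mul_assoc]

lemma mpow_zero {Q : Matrix (Fin n) (Fin n) ℂ} (hQ : Q.PosDef) :
    mpow Q hQ.1 0 = 1 := by
  unfold mpow
  simp only [Real.rpow_zero, Complex.ofReal_one, Matrix.diagonal_one, Matrix.mul_one]
  exact mul_star_self_eigU hQ.1

lemma mpow_one {Q : Matrix (Fin n) (Fin n) ℂ} (hQ : Q.PosDef) :
    mpow Q hQ.1 1 = Q := by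
  unfold mpow
  simp only [Real.rpow_one]
  exact (hQ.1.spectral_theorem).symm

lemma mpow_conjTranspose {Q : Matrix (Fin n) (Fin n) ℂ} (hQ : Q.IsHermitian) (r : ℝ) :
    (mpow Q hQ r)ᴴ = mpow Q hQ r := by
  unfold mpow
  have hD : star (Matrix.diagonal fun i => ((hQ.eigenvalues i ^ r : ℝ) : ℂ))
      = Matrix.diagonal fun i => ((hQ.eigenvalues i ^ r : ℝ) : ℂ) := by
    rw [Matrix.star_eq_conjTranspose, Matrix.diagonal_conjTranspose]
    have : (star fun i => ((hQ.eigenvalues i ^ r : ℝ) : ℂ))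
        = fun i => ((hQ.eigenvalues i ^ r : ℝ) : ℂ) := by
      funext i
      simp [Complex.star_def, Complex.conj_ofReal]
    rw [this]
  rw [← Matrix.star_eq_conjTranspose, StarMul.star_mul, StarMul.star_mul, star_star, hD,
    Matrix.mul_assoc]

lemma sum_eigenvalues_eq_trace_re {B : Matrix (Fin n) (Fin n) ℂ} (hB : B.IsHermitian) :
    ∑ i, hB.eigenvalues i = (Matrix.trace B).re := by
  have h : Matrix.trace B = ((∑ i, hB.eigenvalues i : ℝ) : ℂ) := by
    conv_lhs => rw [hB.spectral_theorem]
    rw [Unitary.conjStarAlgAut_apply, Matrix.trace_mul_cycle, star_mul_self_eigU hB, Matrix.one_mul, Matrix.trace_diagonal]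
    push_cast
    rfl
  rw [h, Complex.ofReal_re]


lemma schatten_rpow {n : ℕ} (B : Matrix (Fin n) (Fin n) ℂ) {a : ℝ} (ha : 0 < a) :
    schatten a B ^ a =
      ∑ i, ((Matrix.posSemidef_conjTranspose_mul_self B).1.eigenvalues i) ^ (a / 2) := by
  unfold schatten
  rw [← Real.rpow_mul (Finset.sum_nonneg fun i _ => Real.rpow_nonneg
    ((Matrix.posSemidef_conjTranspose_mul_self B).eigenvalues_nonneg i) _),
    one_div, inv_mul_cancel₀ ha.ne', Real.rpow_one]

lemma core {n : ℕ} {A Q : Matrix (Fin n) (Fin n) ℂ} (hA : A.PosSemidef) (hQ : Q.PosDef)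
    {p q : ℝ} (hpq : p.HolderConjugate q) :
    (Matrix.trace (A * mpow Q hQ.1 (1 - 1/p))).re ≤
      (∑ i, hA.1.eigenvalues i ^ p) ^ (1/p) * ((Matrix.trace Q).re) ^ (1/q) := by
  classical
  set lam := hQ.1.eigenvalues with hlam
  set g : Fin n → ℝ := fun j => lam j ^ (1 - 1/p) with hgdef
  set μ := hA.1.eigenvalues with hmu
  set V : Matrix (Fin n) (Fin n) ℂ := (hA.1.eigenvectorUnitary : Matrix (Fin n) (Fin n) ℂ)
    with hV
  set U : Matrix (Fin n) (Fin n) ℂ := (hQ.1.eigenvectorUnitary : Matrix (Fin n) (Fin n) ℂ)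
    with hU
  set T := star V * U with hT
  set c : Fin n → Fin n → ℝ := fun i j => Complex.normSq (T i j) with hc
  have hVV : V * star V = 1 := mul_star_self_eigU hA.1
  have hVV' : star V * V = 1 := star_mul_self_eigU hA.1
  have hUU : U * star U = 1 := mul_star_self_eigU hQ.1
  have hUU' : star U * U = 1 := star_mul_self_eigU hQ.1
  have hTT : T * star T = 1 := by
    rw [hT, StarMul.star_mul, star_star, Matrix.mul_assoc, ← Matrix.mul_assoc U, hUU,
      Matrix.one_mul, hVV']
  have hTT' : star T * T = 1 := by
    rw [hT, StarMul.star_mul, star_star, Matrix.mul_assoc, ← Matrix.mul_assoc V, hVV,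
      Matrix.one_mul, hUU']
  have hrow : ∀ i, ∑ j, c i j = 1 := by
    intro i
    have h1 : (T * star T) i i = 1 := by rw [hTT]; simp [Matrix.one_apply]
    rw [Matrix.mul_apply] at h1
    have h2 : ∀ j ∈ Finset.univ, T i j * (star T) j i = ((c i j : ℝ) : ℂ) := by
      intro j _
      rw [Matrix.star_apply, Complex.star_def, Complex.mul_conj]
    rw [Finset.sum_congr rfl h2] at h1
    exact_mod_cast h1
  have hcol : ∀ j, ∑ i, c i j = 1 := by
    intro j
    have h1 : (star T * T) j j = 1 := by rw [hTT']; simp [Matrix.one_apply]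
    rw [Matrix.mul_apply] at h1
    have h2 : ∀ i ∈ Finset.univ, (star T) j i * T i j = ((c i j : ℝ) : ℂ) := by
      intro i _
      rw [Matrix.star_apply, Complex.star_def, mul_comm, Complex.mul_conj]
    rw [Finset.sum_congr rfl h2] at h1
    exact_mod_cast h1
  -- key matrix identity
  have key : ∀ (D E : Matrix (Fin n) (Fin n) ℂ),
      (V * D * star V) * (U * E * star U) = V * (D * T * E * star T) * star V := by
    intro D E
    rw [hT, StarMul.star_mul, star_star]
    simp only [Matrix.mul_assoc]
    rw [hVV, Matrix.mul_one]
  have hAG : A * mpow Q hQ.1 (1 - 1/p) =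
      V * (Matrix.diagonal (RCLike.ofReal ∘ μ) * T *
        Matrix.diagonal (fun j => ((g j : ℝ) : ℂ)) * star T) * star V := by
    conv_lhs => rw [hA.1.spectral_theorem]
    unfold mpow
    exact key _ _
  have htr : (Matrix.trace (A * mpow Q hQ.1 (1 - 1/p))).re
      = ∑ i, ∑ j, μ i * g j * c i j := by
    have hWdiag : ∀ i, (T * Matrix.diagonal (fun j => ((g j : ℝ) : ℂ)) * star T) i i
        = ∑ j, ((g j * c i j : ℝ) : ℂ) := by
      intro i
      rw [Matrix.mul_apply]
      refine Finset.sum_congr rfl fun j _ => ?_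
      rw [Matrix.mul_diagonal, Matrix.star_apply, Complex.star_def,
        mul_comm (T i j) (((g j : ℝ) : ℂ)), mul_assoc, Complex.mul_conj]
      push_cast
      ring
    have h3 : Matrix.trace (A * mpow Q hQ.1 (1 - 1/p)) =
        ∑ i, ((μ i : ℝ) : ℂ) * ∑ j, ((g j * c i j : ℝ) : ℂ) := by
      rw [hAG, Matrix.trace_mul_cycle, hVV', Matrix.one_mul]
      rw [show (Matrix.diagonal (RCLike.ofReal ∘ μ) * T *
        Matrix.diagonal (fun j => ((g j : ℝ) : ℂ)) * star T)
        = Matrix.diagonal (RCLike.ofReal ∘ μ) * (T *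
        Matrix.diagonal (fun j => ((g j : ℝ) : ℂ)) * star T) from by
          simp only [Matrix.mul_assoc]]
      unfold Matrix.trace
      refine Finset.sum_congr rfl fun i _ => ?_
      rw [Matrix.diag_apply, Matrix.diagonal_mul, hWdiag i]
      rfl
    have h4 : (∑ i, ((μ i : ℝ) : ℂ) * ∑ j, ((g j * c i j : ℝ) : ℂ))
        = ((∑ i, ∑ j, μ i * (g j * c i j) : ℝ) : ℂ) := by
      push_cast
      refine Finset.sum_congr rfl fun i _ => ?_
      rw [Finset.mul_sum]
    rw [h3, h4, Complex.ofReal_re]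
    refine Finset.sum_congr rfl fun i _ => Finset.sum_congr rfl fun j _ => by ring
  have hμ0 : ∀ i, 0 ≤ μ i := hA.eigenvalues_nonneg
  have hlam0 : ∀ j, 0 < lam j := hQ.eigenvalues_pos
  have hc0 : ∀ i j, 0 ≤ c i j := fun i j => Complex.normSq_nonneg _
  set F : Fin n → ℝ := fun j => ∑ i, μ i * c i j with hF
  have hF0 : ∀ j, 0 ≤ F j := fun j =>
    Finset.sum_nonneg fun i _ => mul_nonneg (hμ0 i) (hc0 i j)
  have hstep0 : ∑ i, ∑ j, μ i * g j * c i j = ∑ j, F j * g j := by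
    rw [Finset.sum_comm]
    refine Finset.sum_congr rfl fun j _ => ?_
    rw [hF, Finset.sum_mul]
    exact Finset.sum_congr rfl fun i _ => by ring
  have holder : ∑ j, F j * g j ≤ (∑ j, F j ^ p) ^ (1/p) * (∑ j, g j ^ q) ^ (1/q) :=
    Real.inner_le_Lp_mul_Lq_of_nonneg Finset.univ hpq (fun j _ => hF0 j)
      (fun j _ => Real.rpow_nonneg (hlam0 j).le _)
  have hgq : ∑ j, g j ^ q = (Matrix.trace Q).re := by
    rw [← sum_eigenvalues_eq_trace_re hQ.1]
    refine Finset.sum_congr rfl fun j _ => ?_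
    rw [hgdef]
    rw [← Real.rpow_mul (hlam0 j).le]
    rw [show (1 - 1/p) * q = 1 from by
      rw [one_div, hpq.one_sub_inv, inv_mul_cancel₀ hpq.symm.ne_zero]]
    exact Real.rpow_one _
  have hconv : ∀ j, F j ^ p ≤ ∑ i, c i j * μ i ^ p := by
    intro j
    have h4 := Real.rpow_arith_mean_le_arith_mean_rpow Finset.univ (fun i => c i j) μ
      (fun i _ => hc0 i j) (hcol j) (fun i _ => hμ0 i) hpq.lt.le
    have hFj : F j = ∑ i, c i j * μ i := by
      rw [hF]; exact Finset.sum_congr rfl fun i _ => mul_comm _ _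
    rw [hFj]
    exact h4
  have hsum2 : ∑ j, F j ^ p ≤ ∑ i, μ i ^ p := by
    calc ∑ j, F j ^ p ≤ ∑ j, ∑ i, c i j * μ i ^ p :=
          Finset.sum_le_sum fun j _ => hconv j
    _ = ∑ i, (∑ j, c i j) * μ i ^ p := by
          rw [Finset.sum_comm]
          exact Finset.sum_congr rfl fun i _ => (Finset.sum_mul _ _ _).symm
    _ = ∑ i, μ i ^ p := Finset.sum_congr rfl fun i _ => by rw [hrow i, one_mul]
  have hmono : (∑ j, F j ^ p) ^ (1/p) ≤ (∑ i, μ i ^ p) ^ (1/p) :=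
    Real.rpow_le_rpow (Finset.sum_nonneg fun j _ => Real.rpow_nonneg (hF0 j) p) hsum2
      hpq.one_div_nonneg
  have htQ0 : 0 ≤ (Matrix.trace Q).re := by
    rw [← sum_eigenvalues_eq_trace_re hQ.1]
    exact Finset.sum_nonneg fun j _ => (hlam0 j).le
  calc (Matrix.trace (A * mpow Q hQ.1 (1 - 1/p))).re
      = ∑ j, F j * g j := by rw [htr, hstep0]
    _ ≤ (∑ j, F j ^ p) ^ (1/p) * (∑ j, g j ^ q) ^ (1/q) := holder
    _ = (∑ j, F j ^ p) ^ (1/p) * ((Matrix.trace Q).re) ^ (1/q) := by rw [hgq]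
    _ ≤ (∑ i, μ i ^ p) ^ (1/p) * ((Matrix.trace Q).re) ^ (1/q) :=
        mul_le_mul_of_nonneg_right hmono (Real.rpow_nonneg htQ0 _)

end LSAux

namespace LSAux

lemma trace_conjTranspose_mul_self_re_pos {n : ℕ} {C : Matrix (Fin n) (Fin n) ℂ} (hC : C ≠ 0) :
    0 < (Matrix.trace (Cᴴ * C)).re := by
  have h1 : Matrix.trace (Cᴴ * C) = ∑ j, ∑ i, ((Complex.normSq (C i j) : ℝ) : ℂ) := by
    unfold Matrix.trace
    refine Finset.sum_congr rfl fun j _ => ?_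
    rw [Matrix.diag_apply, Matrix.mul_apply]
    refine Finset.sum_congr rfl fun i _ => ?_
    rw [Matrix.conjTranspose_apply, Complex.star_def, mul_comm, Complex.mul_conj]
  have h4 : (∑ j, ∑ i, ((Complex.normSq (C i j) : ℝ) : ℂ))
      = ((∑ j, ∑ i, Complex.normSq (C i j) : ℝ) : ℂ) := by push_cast; rfl
  have h2 : (Matrix.trace (Cᴴ * C)).re = ∑ j, ∑ i, Complex.normSq (C i j) := by
    rw [h1, h4, Complex.ofReal_re]
  obtain ⟨i, j, hij⟩ : ∃ i j, C i j ≠ 0 := by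
    by_contra h
    push_neg at h
    exact hC (by ext i j; simpa using h i j)
  rw [h2]
  refine Finset.sum_pos' (fun j _ => Finset.sum_nonneg fun i _ => Complex.normSq_nonneg _)
    ⟨j, Finset.mem_univ _, ?_⟩
  exact Finset.sum_pos' (fun i _ => Complex.normSq_nonneg _)
    ⟨i, Finset.mem_univ _, Complex.normSq_pos.mpr hij⟩

end LSAux

theorem log_schatten_ratio_le {n : ℕ} (Q X : Matrix (Fin n) (Fin n) ℂ) (hQ : Q.PosDef)
    (hX : X ≠ 0) (p : ℝ) (hp1 : 1 < p) :
    (Real.log (schatten (2 * p) (X * mpow Q hQ.1 (1 / (2 * p))) ^ (2 * p)) -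
        Real.log (schatten 2 (X * mpow Q hQ.1 (1 / 2)) ^ (2 : ℝ))) / (1 - p) ≤
      Real.log ((Matrix.trace Q).re) -
        Real.log (schatten 2 (X * mpow Q hQ.1 (1 / 2)) ^ (2 : ℝ)) := by
  classical
  have hp0 : (0:ℝ) < p := lt_trans one_pos hp1
  have hp2 : (0:ℝ) < 2 * p := by linarith
  have hpm1 : p - 1 ≠ 0 := sub_ne_zero.mpr (ne_of_gt hp1)
  set q : ℝ := p / (p - 1) with hqdef
  have hpq : Real.HolderConjugate p q := (Real.holderConjugate_iff_eq_conjExponent hp1).mpr rfl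
  rcases Nat.eq_zero_or_pos n with rfl | hn
  · exact absurd (by ext i j; exact i.elim0) hX
  haveI : Nonempty (Fin n) := ⟨⟨0, hn⟩⟩
  have hA : ((X * mpow Q hQ.1 (1 / (2 * p)))ᴴ * (X * mpow Q hQ.1 (1 / (2 * p)))).PosSemidef :=
    Matrix.posSemidef_conjTranspose_mul_self _
  have hN : ((X * mpow Q hQ.1 (1 / 2))ᴴ * (X * mpow Q hQ.1 (1 / 2))).PosSemidef :=
    Matrix.posSemidef_conjTranspose_mul_self _
  -- abbreviations for the two eigenvalue sums
  have f1 : schatten (2 * p) (X * mpow Q hQ.1 (1 / (2 * p))) ^ (2 * p) =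
      ∑ i, (Matrix.posSemidef_conjTranspose_mul_self
        (X * mpow Q hQ.1 (1 / (2 * p)))).1.eigenvalues i ^ p := by
    rw [LSAux.schatten_rpow _ hp2]
    simp only [show (2 * p) / 2 = p from by ring]
  have f2 : schatten 2 (X * mpow Q hQ.1 (1 / 2)) ^ (2 : ℝ) =
      ∑ i, (Matrix.posSemidef_conjTranspose_mul_self
        (X * mpow Q hQ.1 (1 / 2))).1.eigenvalues i := by
    rw [LSAux.schatten_rpow _ (by norm_num : (0:ℝ) < 2)]
    simp only [show (2:ℝ) / 2 = 1 from by norm_num, Real.rpow_one]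
  -- trace identities
  have e1 : Matrix.trace ((X * mpow Q hQ.1 (1 / (2 * p)))ᴴ * (X * mpow Q hQ.1 (1 / (2 * p))) *
      mpow Q hQ.1 (1 - 1 / p)) = Matrix.trace ((Xᴴ * X) * Q) := by
    rw [show (X * mpow Q hQ.1 (1 / (2 * p)))ᴴ * (X * mpow Q hQ.1 (1 / (2 * p))) *
        mpow Q hQ.1 (1 - 1 / p)
        = mpow Q hQ.1 (1 / (2 * p)) * ((Xᴴ * X) *
          (mpow Q hQ.1 (1 / (2 * p)) * mpow Q hQ.1 (1 - 1 / p))) from by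
      rw [Matrix.conjTranspose_mul, LSAux.mpow_conjTranspose]
      simp only [Matrix.mul_assoc]]
    rw [Matrix.trace_mul_comm, Matrix.mul_assoc, LSAux.mpow_mul_mpow hQ,
      LSAux.mpow_mul_mpow hQ, show 1 / (2 * p) + (1 - 1 / p) + 1 / (2 * p) = 1 from by
        field_simp
        ring,
      LSAux.mpow_one hQ]
  have e2 : Matrix.trace ((X * mpow Q hQ.1 (1 / 2))ᴴ * (X * mpow Q hQ.1 (1 / 2))) =
      Matrix.trace ((Xᴴ * X) * Q) := by
    rw [show (X * mpow Q hQ.1 (1 / 2))ᴴ * (X * mpow Q hQ.1 (1 / 2))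
        = mpow Q hQ.1 (1 / 2) * ((Xᴴ * X) * mpow Q hQ.1 (1 / 2)) from by
      rw [Matrix.conjTranspose_mul, LSAux.mpow_conjTranspose]
      simp only [Matrix.mul_assoc]]
    rw [Matrix.trace_mul_comm, Matrix.mul_assoc, LSAux.mpow_mul_mpow hQ,
      show (1:ℝ) / 2 + 1 / 2 = 1 from by norm_num, LSAux.mpow_one hQ]
  -- positivity facts
  have hC : X * mpow Q hQ.1 (1 / 2) ≠ 0 := by
    intro h
    apply hX
    have h' := congrArg (fun Y => Y * mpow Q hQ.1 (-(1 / 2))) h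
    simp only [Matrix.zero_mul] at h'
    rw [Matrix.mul_assoc, LSAux.mpow_mul_mpow hQ,
      show (1:ℝ) / 2 + -(1 / 2) = 0 from by norm_num, LSAux.mpow_zero hQ,
      Matrix.mul_one] at h'
    exact h'
  have hS2pos : 0 <
      ∑ i, (Matrix.posSemidef_conjTranspose_mul_self
        (X * mpow Q hQ.1 (1 / 2))).1.eigenvalues i := by
    rw [LSAux.sum_eigenvalues_eq_trace_re]
    exact LSAux.trace_conjTranspose_mul_self_re_pos hC
  have ht : 0 < (Matrix.trace Q).re := by
    rw [← LSAux.sum_eigenvalues_eq_trace_re hQ.1]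
    exact Finset.sum_pos (fun i _ => hQ.eigenvalues_pos i) Finset.univ_nonempty
  -- the key inequality
  have hineq : (∑ i, (Matrix.posSemidef_conjTranspose_mul_self
        (X * mpow Q hQ.1 (1 / 2))).1.eigenvalues i) ≤
      (∑ i, (Matrix.posSemidef_conjTranspose_mul_self
        (X * mpow Q hQ.1 (1 / (2 * p)))).1.eigenvalues i ^ p) ^ (1 / p) *
      ((Matrix.trace Q).re) ^ (1 / q) := by
    rw [LSAux.sum_eigenvalues_eq_trace_re, e2, ← e1]
    exact LSAux.core (Matrix.posSemidef_conjTranspose_mul_self _) hQ hpq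
  have hS2p0 : 0 ≤ ∑ i, (Matrix.posSemidef_conjTranspose_mul_self
      (X * mpow Q hQ.1 (1 / (2 * p)))).1.eigenvalues i ^ p :=
    Finset.sum_nonneg fun i _ => Real.rpow_nonneg
      ((Matrix.posSemidef_conjTranspose_mul_self _).eigenvalues_nonneg i) _
  have hS2ppos : 0 < ∑ i, (Matrix.posSemidef_conjTranspose_mul_self
      (X * mpow Q hQ.1 (1 / (2 * p)))).1.eigenvalues i ^ p := by
    rcases hS2p0.eq_or_lt with h | h
    · exfalso
      rw [← h, Real.zero_rpow (one_div_ne_zero hp0.ne'), zero_mul] at hineq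
      exact absurd hineq (not_le.mpr hS2pos)
    · exact h
  -- power form of the inequality
  set S2 := ∑ i, (Matrix.posSemidef_conjTranspose_mul_self
      (X * mpow Q hQ.1 (1 / 2))).1.eigenvalues i with hS2def
  set S2p := ∑ i, (Matrix.posSemidef_conjTranspose_mul_self
      (X * mpow Q hQ.1 (1 / (2 * p)))).1.eigenvalues i ^ p with hS2pdef
  have hpow : S2 ^ p ≤ S2p * (Matrix.trace Q).re ^ (p - 1) := by
    calc S2 ^ p ≤ (S2p ^ (1 / p) * ((Matrix.trace Q).re) ^ (1 / q)) ^ p :=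
          Real.rpow_le_rpow hS2pos.le hineq hp0.le
    _ = S2p * (Matrix.trace Q).re ^ (p - 1) := by
        rw [Real.mul_rpow (Real.rpow_nonneg hS2p0 _) (Real.rpow_nonneg ht.le _),
          ← Real.rpow_mul hS2p0, ← Real.rpow_mul ht.le,
          show 1 / p * p = 1 from by field_simp,
          show 1 / q * p = p / q from by ring, hpq.div_conj_eq_sub_one, Real.rpow_one]
  have hlog : p * Real.log S2 ≤ Real.log S2p + (p - 1) * Real.log ((Matrix.trace Q).re) := by
    have h5 : Real.log (S2 ^ p) ≤ Real.log (S2p * (Matrix.trace Q).re ^ (p - 1)) :=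
      (Real.log_le_log_iff (Real.rpow_pos_of_pos hS2pos p)
        (mul_pos hS2ppos (Real.rpow_pos_of_pos ht _))).mpr hpow
    rw [Real.log_rpow hS2pos, Real.log_mul hS2ppos.ne'
      (Real.rpow_pos_of_pos ht (p - 1)).ne', Real.log_rpow ht] at h5
    exact h5
  rw [f1, f2, div_le_iff_of_neg (by linarith : (1:ℝ) - p < 0)]
  nlinarith [hlog]
end

section
/- Let $0 < q < 1$ and for $n \in \mathbb{N}$ set $d_n = \frac{q^{-n}(1-q^{2n+2})}{1-q^2}$ and let $x_n = \left(\frac{1}{d_n q^{-n+2j}}\right)_{j=0}^n$, which is a probability distribution on $\{0,1,\dots,n\}$. Then the Shannon entropy $H(x_n) = \sum_{j=0}^n \frac{1}{d_n q^{-n+2j}}\log(d_n q^{-n+2j})$ satisfies $\lim_{n\to\infty} H(x_n) = \log\left(\frac{1}{1-q^2}\right) + \frac{2q^2\log(q^{-1})}{1-q^2}$. In particular, $\sup_n H(x_n) < \infty$. -/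
/-- The quantum dimension `d_n = q^{-n}(1-q^{2n+2})/(1-q^2)` of the `(n+1)`-dimensional
irreducible representation of `SU_q(2)`. -/
noncomputable def dq (q : ℝ) (n : ℕ) : ℝ := (1 - q ^ (2 * n + 2)) / (1 - q ^ 2) / q ^ n

/-- The Shannon entropy of the probability distribution `x_n = (1/(d_n q^{-n+2j}))_{j=0}^n`. -/
noncomputable def Hq (q : ℝ) (n : ℕ) : ℝ :=
  ∑ j ∈ Finset.range (n + 1),
    (dq q n * (q ^ (2 * j) / q ^ n))⁻¹ * Real.log (dq q n * (q ^ (2 * j) / q ^ n))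

theorem entropy_xn_tendsto (q : ℝ) (hq0 : 0 < q) (hq1 : q < 1) :
    (∀ n : ℕ, ∑ j ∈ Finset.range (n + 1), (dq q n * (q ^ (2 * j) / q ^ n))⁻¹ = 1) ∧
      Filter.Tendsto (fun n : ℕ => Hq q n) Filter.atTop
        (nhds (Real.log (1 / (1 - q ^ 2)) + 2 * q ^ 2 * Real.log q⁻¹ / (1 - q ^ 2))) ∧
      BddAbove (Set.range fun n : ℕ => Hq q n) := by
  have hq0' : q ≠ 0 := ne_of_gt hq0
  set r : ℝ := q ^ 2 with hr
  have hr0 : (0:ℝ) < r := by positivity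
  have hr1 : r < 1 := by nlinarith
  have h1r : (0:ℝ) < 1 - r := by linarith
  set S : ℕ → ℝ := fun n => ∑ k ∈ Finset.range (n + 1), r ^ k with hS
  have hSpos : ∀ n, 0 < S n := fun n =>
    Finset.sum_pos (fun k _ => pow_pos hr0 k) ⟨0, Finset.mem_range.mpr (Nat.succ_pos n)⟩
  have hdq : ∀ n, dq q n = S n / q ^ n := by
    intro n
    have hgs : S n = (1 - q ^ (2 * n + 2)) / (1 - q ^ 2) := by
      rw [hS]
      simp only
      rw [geom_sum_eq (ne_of_lt hr1)]
      have : r ^ (n + 1) = q ^ (2 * n + 2) := by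
        rw [hr, ← pow_mul]; ring_nf
      rw [this]
      rw [div_eq_div_iff (by intro h; apply (ne_of_lt hr1); linarith [sub_eq_zero.mp h] ) (ne_of_gt h1r)]
      ring
    rw [dq, hgs]
  have hterm : ∀ n j, j ≤ n → dq q n * (q ^ (2 * (n - j)) / q ^ n) = S n / r ^ j := by
    intro n j hj
    have h2 : q ^ (2 * (n - j)) * r ^ j = q ^ n * q ^ n := by
      rw [hr, ← pow_mul, ← pow_add, ← pow_add]
      congr 1
      omega
    rw [hdq]
    have hrj : r ^ j ≠ 0 := ne_of_gt (pow_pos hr0 j)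
    have hqn : (q:ℝ) ^ n ≠ 0 := pow_ne_zero n hq0'
    field_simp
    linear_combination S n * h2
  -- part 1
  have hsum1 : ∀ n : ℕ, ∑ j ∈ Finset.range (n + 1), (dq q n * (q ^ (2 * j) / q ^ n))⁻¹ = 1 := by
    intro n
    rw [← Finset.sum_range_reflect (fun j => (dq q n * (q ^ (2 * j) / q ^ n))⁻¹) (n + 1)]
    have : ∀ j ∈ Finset.range (n + 1),
        (dq q n * (q ^ (2 * (n + 1 - 1 - j)) / q ^ n))⁻¹ = r ^ j / S n := by
      intro j hj
      rw [Finset.mem_range] at hj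
      have hj' : j ≤ n := by omega
      have : n + 1 - 1 - j = n - j := by omega
      rw [this, hterm n j hj', inv_div]
    rw [Finset.sum_congr rfl this, ← Finset.sum_div]
    exact div_self (ne_of_gt (hSpos n))
  refine ⟨hsum1, ?_⟩
  -- closed form for Hq
  have hHq : ∀ n, Hq q n = Real.log (S n)
      - Real.log r * ((∑ k ∈ Finset.range (n + 1), (k : ℝ) * r ^ k) / S n) := by
    intro n
    unfold Hq
    rw [← Finset.sum_range_reflect (fun j => (dq q n * (q ^ (2 * j) / q ^ n))⁻¹
      * Real.log (dq q n * (q ^ (2 * j) / q ^ n))) (n + 1)]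
    have hcong : ∀ j ∈ Finset.range (n + 1),
        (dq q n * (q ^ (2 * (n + 1 - 1 - j)) / q ^ n))⁻¹
          * Real.log (dq q n * (q ^ (2 * (n + 1 - 1 - j)) / q ^ n))
        = Real.log (S n) * (r ^ j / S n) - Real.log r * ((j : ℝ) * r ^ j / S n) := by
      intro j hj
      rw [Finset.mem_range] at hj
      have hj' : j ≤ n := by omega
      have he : n + 1 - 1 - j = n - j := by omega
      rw [he, hterm n j hj',
        Real.log_div (ne_of_gt (hSpos n)) (ne_of_gt (pow_pos hr0 j)), Real.log_pow, inv_div]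
      field_simp
    rw [Finset.sum_congr rfl hcong, Finset.sum_sub_distrib]
    have h1 : ∑ j ∈ Finset.range (n + 1), Real.log (S n) * (r ^ j / S n) = Real.log (S n) := by
      rw [← Finset.mul_sum, ← Finset.sum_div]
      rw [show (∑ i ∈ Finset.range (n + 1), r ^ i) = S n from rfl]
      rw [div_self (ne_of_gt (hSpos n)), mul_one]
    have h2 : ∑ j ∈ Finset.range (n + 1), Real.log r * ((j : ℝ) * r ^ j / S n)
        = Real.log r * ((∑ k ∈ Finset.range (n + 1), (k : ℝ) * r ^ k) / S n) := by
      rw [← Finset.mul_sum, ← Finset.sum_div]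
    rw [h1, h2]
  -- limits
  have hSlim : Filter.Tendsto S Filter.atTop (nhds (1 - r)⁻¹) := by
    have h := (hasSum_geometric_of_lt_one hr0.le hr1).tendsto_sum_nat
    exact h.comp (Filter.tendsto_add_atTop_nat 1)
  have hTlim : Filter.Tendsto (fun n => ∑ k ∈ Finset.range (n + 1), (k : ℝ) * r ^ k)
      Filter.atTop (nhds (r / (1 - r) ^ 2)) := by
    have hnorm : ‖r‖ < 1 := by rw [Real.norm_eq_abs, abs_of_pos hr0]; exact hr1
    have h := (hasSum_coe_mul_geometric_of_norm_lt_one hnorm).tendsto_sum_nat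
    exact h.comp (Filter.tendsto_add_atTop_nat 1)
  have hloglim : Filter.Tendsto (fun n => Real.log (S n)) Filter.atTop
      (nhds (Real.log (1 - r)⁻¹)) :=
    (Real.continuousAt_log (by positivity)).tendsto.comp hSlim
  have hlim : Filter.Tendsto (fun n : ℕ => Hq q n) Filter.atTop
      (nhds (Real.log (1 - r)⁻¹ - Real.log r * (r / (1 - r) ^ 2 / (1 - r)⁻¹))) := by
    refine Filter.Tendsto.congr (fun n => (hHq n).symm) ?_
    exact hloglim.sub (Filter.Tendsto.const_mul _ (hTlim.div hSlim (by positivity)))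
  have heq : Real.log (1 - r)⁻¹ - Real.log r * (r / (1 - r) ^ 2 / (1 - r)⁻¹)
      = Real.log (1 / (1 - q ^ 2)) + 2 * q ^ 2 * Real.log q⁻¹ / (1 - q ^ 2) := by
    rw [hr, Real.log_inv, Real.log_pow, one_div, Real.log_inv, Real.log_inv]
    push_cast
    field_simp
    ring
  rw [← heq] at *
  exact ⟨hlim, hlim.bddAbove_range⟩
end
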